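/- Let n ≥ 1 and consider Dyck-type lattice paths in an n×n grid (from top-left to bottom-right with unit right/down steps, staying weakly above the diagonal). Mark each unit square lying in an even-indexed column and odd-indexed row with an X. Then the number of such paths with even area above the path that touch two edges of some X-marked square equals the number of such paths with odd area above the path that touch two edges of some X-marked square; i.e., the involution toggling the first doubly-touched X-square is a sign-reversing involution on this set of paths. -/

import Mathlib

/-- Dyck-type lattice paths in an `n × n` grid: `2n` steps (`true` = unit right step,
`false` = unit down step), exactly `n` right steps, every prefix having at least as many
right steps as down steps (the path stays weakly above the main diagonal, going from the
top-left corner to the bottom-right corner). -/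
def dyckSet (n : ℕ) : Finset (Fin (2 * n) → Bool) :=
  Finset.univ.filter (fun f =>
    (Finset.univ.filter (fun i => f i = true)).card = n ∧
    ∀ k : Fin (2 * n),
      (Finset.univ.filter (fun i => i ≤ k ∧ f i = false)).card ≤
        (Finset.univ.filter (fun i => i ≤ k ∧ f i = true)).card)

/-- The area above the path: the number of unit squares strictly above it, i.e. the number
of pairs (down step, later right step). -/
def areaAbove {n : ℕ} (f : Fin (2 * n) → Bool) : ℕ :=
  (Finset.univ.filter
    (fun p : Fin (2 * n) × Fin (2 * n) => p.1 < p.2 ∧ f p.1 = false ∧ f p.2 = true)).card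

/-- The lattice point (x = number of right steps so far, y = number of down steps so far)
at which step `k` of the path starts; the top-left corner is `(0, 0)`. -/
def pathPoint {n : ℕ} (f : Fin (2 * n) → Bool) (k : Fin (2 * n)) : ℕ × ℕ :=
  ((Finset.univ.filter (fun u : Fin (2 * n) => u < k ∧ f u = true)).card,
   (Finset.univ.filter (fun u : Fin (2 * n) => u < k ∧ f u = false)).card)

/-- The four unit edges of the square in column `i`, row `j` (both 1-indexed), each encoded
as (starting lattice point, direction: `true` = rightward, `false` = downward):
top, bottom, left and right edges. -/
def squareEdges (i j : ℕ) : Finset ((ℕ × ℕ) × Bool) :=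
  {((i - 1, j - 1), true), ((i - 1, j), true), ((i - 1, j - 1), false), ((i, j - 1), false)}

/-- The path `f` touches at least two of the four edges of the square in column `i`,
row `j`. -/
def TouchesTwo {n : ℕ} (f : Fin (2 * n) → Bool) (i j : ℕ) : Prop :=
  2 ≤ (Finset.univ.filter
        (fun k : Fin (2 * n) => (pathPoint f k, f k) ∈ squareEdges i j)).card

instance {n : ℕ} (f : Fin (2 * n) → Bool) (i j : ℕ) : Decidable (TouchesTwo f i j) :=
  inferInstanceAs (Decidable (2 ≤ _))

/-- The path `f` touches two edges of some X-marked square, where the X-marked squares are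
those in an even-indexed column and odd-indexed row (columns and rows 1-indexed). -/
def TouchesXSquare (n : ℕ) (f : Fin (2 * n) → Bool) : Prop :=
  ∃ i ∈ Finset.Icc 1 n, ∃ j ∈ Finset.Icc 1 n, Even i ∧ Odd j ∧ TouchesTwo f i j

instance (n : ℕ) (f : Fin (2 * n) → Bool) : Decidable (TouchesXSquare n f) := by
  unfold TouchesXSquare; infer_instance

open Finset

namespace Stmt19

variable {n : ℕ}

/-- count of `b`-steps strictly before `k` -/
def cnt (f : Fin (2*n) → Bool) (b : Bool) (k : Fin (2*n)) : ℕ :=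
  (univ.filter fun u => u < k ∧ f u = b).card

/-- count of `b`-steps up to and including `k` -/
def cntLe (f : Fin (2*n) → Bool) (b : Bool) (k : Fin (2*n)) : ℕ :=
  (univ.filter fun u => u ≤ k ∧ f u = b).card

lemma pathPoint_eq (f : Fin (2*n) → Bool) (k : Fin (2*n)) :
    pathPoint f k = (cnt f true k, cnt f false k) := rfl

lemma cntLe_eq (f : Fin (2*n) → Bool) (b : Bool) (k : Fin (2*n)) :
    cntLe f b k = cnt f b k + if f k = b then 1 else 0 := by
  classical
  unfold cntLe cnt
  have h : (univ.filter fun u : Fin (2*n) => u ≤ k ∧ f u = b) =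
      (univ.filter fun u => u < k ∧ f u = b) ∪ (univ.filter fun u => u = k ∧ f u = b) := by
    ext u
    simp only [mem_filter, mem_union, mem_univ, true_and]
    constructor
    · rintro ⟨h1, h2⟩
      rcases lt_or_eq_of_le h1 with h | h
      · exact Or.inl ⟨h, h2⟩
      · exact Or.inr ⟨h, h2⟩
    · rintro (⟨h1, h2⟩ | ⟨h1, h2⟩)
      · exact ⟨le_of_lt h1, h2⟩
      · exact ⟨le_of_eq h1, h2⟩
  rw [h, card_union_of_disjoint]
  · congr 1
    by_cases hb : f k = b
    · rw [if_pos hb]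
      rw [show (univ.filter fun u : Fin (2*n) => u = k ∧ f u = b) = {k} from by
        ext u; simp only [mem_filter, mem_univ, true_and, mem_singleton]
        constructor
        · rintro ⟨h1, _⟩; exact h1
        · rintro rfl; exact ⟨rfl, hb⟩]
      simp
    · rw [if_neg hb]
      rw [show (univ.filter fun u : Fin (2*n) => u = k ∧ f u = b) = ∅ from by
        ext u; simp only [mem_filter, mem_univ, true_and, notMem_empty, iff_false]
        rintro ⟨rfl, h2⟩; exact hb h2]
      simp
  · rw [Finset.disjoint_left]
    rintro u hu hu'
    simp only [mem_filter] at hu hu'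
    exact absurd (hu'.2.1 ▸ hu.2.1) (lt_irrefl k)

lemma cnt_succ (f : Fin (2*n) → Bool) (b : Bool) (k : ℕ) (hk : k + 1 < 2*n) :
    cnt f b ⟨k+1, hk⟩ = cntLe f b ⟨k, Nat.lt_of_succ_lt hk⟩ := by
  unfold cnt cntLe
  apply congrArg
  apply filter_congr
  intro u _
  simp only [Fin.lt_def, Fin.le_def, Nat.lt_succ_iff]

lemma cnt_add (f : Fin (2*n) → Bool) (k : Fin (2*n)) :
    cnt f true k + cnt f false k = k.val := by
  classical
  unfold cnt
  have h1 : (univ.filter fun u : Fin (2*n) => u < k ∧ f u = true) =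
      (univ.filter (fun u : Fin (2*n) => u < k)).filter (fun u => f u = true) := by
    rw [filter_filter]
  have h2 : (univ.filter fun u : Fin (2*n) => u < k ∧ f u = false) =
      (univ.filter (fun u : Fin (2*n) => u < k)).filter (fun u => ¬ (f u = true)) := by
    rw [filter_filter]
    apply filter_congr; intro u _
    simp [Bool.not_eq_true]
  rw [h1, h2, Finset.card_filter_add_card_filter_not]
  rw [show (univ.filter fun u : Fin (2*n) => u < k) = Finset.Iio k from by ext u; simp]
  exact Fin.card_Iio k


lemma card_filter_equiv {α : Type*} [Fintype α] [DecidableEq α] (σ : Equiv.Perm α)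
    (q : α → Prop) [DecidablePred q] :
    (univ.filter fun u => q (σ u)).card = (univ.filter q).card := by
  apply Finset.card_nbij' (i := fun u => σ u) (j := fun u => σ.symm u) <;>
    simp +contextual [Finset.mem_filter, Set.MapsTo, Set.LeftInvOn, Set.RightInvOn, Finset.coe_filter]

lemma mem_dyckSet {f : Fin (2*n) → Bool} :
    f ∈ dyckSet n ↔ (univ.filter fun u => f u = true).card = n ∧
      ∀ k : Fin (2*n), cntLe f false k ≤ cntLe f true k := by
  simp only [dyckSet, mem_filter, mem_univ, true_and, cntLe]

lemma cnt_total (f : Fin (2*n) → Bool) (b : Bool) (k : Fin (2*n)) :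
    cntLe f b k ≤ (univ.filter fun u => f u = b).card := by
  apply Finset.card_le_card
  intro u hu
  simp only [mem_filter, cntLe] at *
  exact ⟨hu.1, hu.2.2⟩

lemma total_false (f : Fin (2*n) → Bool) (hf : f ∈ dyckSet n) :
    (univ.filter fun u => f u = false).card = n := by
  have h := Finset.card_filter_add_card_filter_not
    (s := (univ : Finset (Fin (2*n)))) (p := fun u => f u = true)
  have h2 : (univ.filter fun u => ¬ (f u = true)).card
      = (univ.filter fun u => f u = false).card := by
    apply congrArg; apply filter_congr; intro u _; simp [Bool.not_eq_true]
  rw [mem_dyckSet] at hf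
  simp only [Finset.card_univ, Fintype.card_fin] at h
  omega

lemma cnt_le (f : Fin (2*n) → Bool) (hf : f ∈ dyckSet n) (k : Fin (2*n)) :
    cnt f false k ≤ cnt f true k := by
  rcases Nat.eq_zero_or_pos k.val with h0 | h0
  · have : ∀ b, cnt f b k = 0 := by
      intro b
      unfold cnt
      rw [Finset.card_eq_zero]
      ext u
      simp only [mem_filter, mem_univ, true_and, notMem_empty, iff_false]
      rintro ⟨hu, -⟩
      rw [Fin.lt_def, h0] at hu
      omega
    rw [this true, this false]
  · have hk1 : k.val - 1 + 1 < 2 * n := by omega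
    have he : ∀ b, cnt f b k = cntLe f b ⟨k.val - 1, by omega⟩ := by
      intro b
      unfold cnt cntLe
      apply congrArg
      apply filter_congr
      intro u _
      have : (u < k ↔ u ≤ (⟨k.val - 1, by omega⟩ : Fin (2*n))) := by
        rw [Fin.lt_def, Fin.le_def]; simp; omega
      rw [this]
    rw [he true, he false]
    exact (mem_dyckSet.mp hf).2 _

/-- the key predicate: step `k` starts at an (odd, even) lattice point and
steps `k`, `k+1` are a right/down or down/right pair. -/
def P (n : ℕ) (f : Fin (2*n) → Bool) (k : ℕ) : Prop :=
  ∃ h : k + 1 < 2 * n,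
    Odd (cnt f true ⟨k, Nat.lt_of_succ_lt h⟩) ∧ Even (cnt f false ⟨k, Nat.lt_of_succ_lt h⟩) ∧
      f ⟨k, Nat.lt_of_succ_lt h⟩ ≠ f ⟨k+1, h⟩

instance (f : Fin (2*n) → Bool) : DecidablePred (P n f) := fun k => by
  unfold P; exact exists_prop_decidable _


lemma touches_of_P (f : Fin (2*n) → Bool) (hf : f ∈ dyckSet n) (k : ℕ) (hP : P n f k) :
    TouchesXSquare n f := by
  obtain ⟨hk, hodd, heven, hne⟩ := hP
  have hlt := Nat.lt_of_succ_lt hk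
  have htot : (univ.filter fun u => f u = true).card = n := (mem_dyckSet.mp hf).1
  have htotf : (univ.filter fun u => f u = false).card = n := total_false f hf
  have hxn : cnt f true ⟨k, hlt⟩ + 1 ≤ n := by
    cases hb : f ⟨k, hlt⟩ with
    | true =>
      have := cnt_total f true ⟨k, hlt⟩
      rw [cntLe_eq, if_pos hb, htot] at this
      omega
    | false =>
      have hb1 : f ⟨k+1, hk⟩ = true := by
        cases hb1 : f ⟨k+1, hk⟩ with
        | true => rfl
        | false => rw [hb, hb1] at hne; exact absurd rfl hne
      have := cnt_total f true ⟨k+1, hk⟩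
      rw [cntLe_eq, if_pos hb1, cnt_succ, cntLe_eq, if_neg (by rw [hb]; simp), htot] at this
      omega
  have hyn : cnt f false ⟨k, hlt⟩ + 1 ≤ n := by
    cases hb : f ⟨k, hlt⟩ with
    | false =>
      have := cnt_total f false ⟨k, hlt⟩
      rw [cntLe_eq, if_pos hb, htotf] at this
      omega
    | true =>
      have hb1 : f ⟨k+1, hk⟩ = false := by
        cases hb1 : f ⟨k+1, hk⟩ with
        | false => rfl
        | true => rw [hb, hb1] at hne; exact absurd rfl hne
      have := cnt_total f false ⟨k+1, hk⟩
      rw [cntLe_eq, if_pos hb1, cnt_succ, cntLe_eq, if_neg (by rw [hb]; simp), htotf] at this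
      omega
  refine ⟨cnt f true ⟨k, hlt⟩ + 1, by simp [Finset.mem_Icc]; omega,
    cnt f false ⟨k, hlt⟩ + 1, by simp [Finset.mem_Icc]; omega,
    by simpa using Odd.add_one hodd, by simpa using Even.add_one heven, ?_⟩
  show 1 < _
  apply Finset.one_lt_card.mpr
  refine ⟨⟨k, hlt⟩, ?_, ⟨k+1, hk⟩, ?_, by simp [Fin.ext_iff]⟩
  · simp only [mem_filter, mem_univ, true_and]
    rw [pathPoint_eq]
    simp only [Nat.add_sub_cancel, squareEdges, Finset.mem_insert, Finset.mem_singleton]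
    cases hb : f ⟨k, hlt⟩ with
    | true => exact Or.inl rfl
    | false => exact Or.inr (Or.inr (Or.inl rfl))
  · simp only [mem_filter, mem_univ, true_and]
    rw [pathPoint_eq, cnt_succ, cnt_succ]
    simp only [Nat.add_sub_cancel, squareEdges, Finset.mem_insert, Finset.mem_singleton]
    cases hb : f ⟨k, hlt⟩ with
    | true =>
      have hb1 : f ⟨k+1, hk⟩ = false := by
        cases hb1 : f ⟨k+1, hk⟩ with
        | false => rfl
        | true => rw [hb, hb1] at hne; exact absurd rfl hne
      rw [hb1, cntLe_eq, cntLe_eq, if_pos hb, if_neg (by rw [hb]; simp)]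
      exact Or.inr (Or.inr (Or.inr rfl))
    | false =>
      have hb1 : f ⟨k+1, hk⟩ = true := by
        cases hb1 : f ⟨k+1, hk⟩ with
        | true => rfl
        | false => rw [hb, hb1] at hne; exact absurd rfl hne
      rw [hb1, cntLe_eq, cntLe_eq, if_pos hb, if_neg (by rw [hb]; simp)]
      exact Or.inr (Or.inl rfl)


lemma exists_P_of_pair (f : Fin (2*n) → Bool) {i j : ℕ}
    (hi1 : 1 ≤ i) (hj1 : 1 ≤ j) (hie : Even i) (hjo : Odd j) (a b : Fin (2*n)) (hab : a < b)
    (ha : (pathPoint f a, f a) ∈ squareEdges i j)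
    (hb : (pathPoint f b, f b) ∈ squareEdges i j) :
    ∃ k, P n f k := by
  obtain ⟨r, hr⟩ := hie
  obtain ⟨t, ht⟩ := hjo
  have hsa := cnt_add f a
  have hsb := cnt_add f b
  have habv : a.val < b.val := hab
  have hbv := b.isLt
  simp only [squareEdges, Finset.mem_insert, Finset.mem_singleton, Prod.mk.injEq,
    pathPoint_eq, Prod.ext_iff] at ha hb
  -- in every possible case, either contradiction or produce the witness a.val
  have key : cnt f true a = i - 1 ∧ cnt f false a = j - 1 ∧ b.val = a.val + 1 ∧
      ((f a = true ∧ f b = false) ∨ (f a = false ∧ f b = true)) := by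
    rcases ha with ⟨⟨h1, h2⟩, h3⟩ | ⟨⟨h1, h2⟩, h3⟩ | ⟨⟨h1, h2⟩, h3⟩ | ⟨⟨h1, h2⟩, h3⟩ <;>
      rcases hb with ⟨⟨g1, g2⟩, g3⟩ | ⟨⟨g1, g2⟩, g3⟩ | ⟨⟨g1, g2⟩, g3⟩ | ⟨⟨g1, g2⟩, g3⟩
    -- a = T cases
    · omega  -- T T : same sum
    · -- T B : contradiction via cnt at b
      exfalso
      have hk : a.val + 1 < 2 * n := by omega
      have hbeq : b = ⟨a.val + 1, hk⟩ := Fin.ext (by simp; omega)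
      rw [hbeq, cnt_succ] at g1
      have : (⟨a.val, Nat.lt_of_succ_lt hk⟩ : Fin (2*n)) = a := Fin.ext rfl
      rw [this, cntLe_eq, if_pos h3] at g1
      omega
    · omega  -- T L : same sum
    · -- T R : good
      exact ⟨h1, h2, by omega, Or.inl ⟨h3, g3⟩⟩
    -- a = B cases
    · omega
    · omega
    · omega
    · omega
    -- a = L cases
    · omega
    · -- L B : good
      exact ⟨h1, h2, by omega, Or.inr ⟨h3, g3⟩⟩
    · omega
    · -- L R : contradiction via cnt at b
      exfalso
      have hk : a.val + 1 < 2 * n := by omega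
      have hbeq : b = ⟨a.val + 1, hk⟩ := Fin.ext (by simp; omega)
      rw [hbeq, cnt_succ] at g2
      have : (⟨a.val, Nat.lt_of_succ_lt hk⟩ : Fin (2*n)) = a := Fin.ext rfl
      rw [this, cntLe_eq, if_pos h3] at g2
      omega
    -- a = R cases
    · omega
    · omega
    · omega
    · omega
  obtain ⟨h1, h2, h3, h4⟩ := key
  have hk : a.val + 1 < 2 * n := by omega
  refine ⟨a.val, hk, ?_, ?_, ?_⟩
  · have : (⟨a.val, Nat.lt_of_succ_lt hk⟩ : Fin (2*n)) = a := Fin.ext rfl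
    rw [this, h1]; exact ⟨r - 1, by omega⟩
  · have : (⟨a.val, Nat.lt_of_succ_lt hk⟩ : Fin (2*n)) = a := Fin.ext rfl
    rw [this, h2]; exact ⟨t, by omega⟩
  · have e1 : (⟨a.val, Nat.lt_of_succ_lt hk⟩ : Fin (2*n)) = a := Fin.ext rfl
    have e2 : (⟨a.val + 1, hk⟩ : Fin (2*n)) = b := Fin.ext (by simp [h3])
    rw [e1, e2]
    rcases h4 with ⟨u1, u2⟩ | ⟨u1, u2⟩ <;> rw [u1, u2] <;> simp

lemma exists_P (f : Fin (2*n) → Bool) (hT : TouchesXSquare n f) : ∃ k, P n f k := by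
  obtain ⟨i, hi, j, hj, hie, hjo, hT2⟩ := hT
  rw [Finset.mem_Icc] at hi hj
  have h2 : 1 < (univ.filter
      (fun k : Fin (2*n) => (pathPoint f k, f k) ∈ squareEdges i j)).card := hT2
  obtain ⟨a, hamem, b, hbmem, hne⟩ := Finset.one_lt_card.mp h2
  simp only [mem_filter, mem_univ, true_and] at hamem hbmem
  rcases Ne.lt_or_gt hne with h | h
  · exact exists_P_of_pair f hi.1 hj.1 hie hjo a b h hamem hbmem
  · exact exists_P_of_pair f hi.1 hj.1 hie hjo b a h hbmem hamem


/-- swap steps `k` and `k+1` of the path -/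
def flipK (f : Fin (2*n) → Bool) (k : ℕ) (hk : k + 1 < 2*n) : Fin (2*n) → Bool :=
  fun u => f (Equiv.swap ⟨k, Nat.lt_of_succ_lt hk⟩ ⟨k+1, hk⟩ u)

lemma flipK_congr (f : Fin (2*n) → Bool) (k k' : ℕ) (hk : k + 1 < 2*n) (hk' : k' + 1 < 2*n)
    (h : k = k') : flipK f k hk = flipK f k' hk' := by subst h; rfl

lemma flipK_flipK (f : Fin (2*n) → Bool) (k : ℕ) (hk : k + 1 < 2*n) :
    flipK (flipK f k hk) k hk = f := by
  funext u
  simp [flipK, Equiv.swap_apply_self]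

lemma flipK_apply_k (f : Fin (2*n) → Bool) (k : ℕ) (hk : k + 1 < 2*n) :
    flipK f k hk ⟨k, Nat.lt_of_succ_lt hk⟩ = f ⟨k+1, hk⟩ := by
  simp [flipK, Equiv.swap_apply_left]

lemma flipK_apply_k1 (f : Fin (2*n) → Bool) (k : ℕ) (hk : k + 1 < 2*n) :
    flipK f k hk ⟨k+1, hk⟩ = f ⟨k, Nat.lt_of_succ_lt hk⟩ := by
  simp [flipK, Equiv.swap_apply_right]

lemma flipK_apply_of_ne (f : Fin (2*n) → Bool) (k : ℕ) (hk : k + 1 < 2*n) (u : Fin (2*n))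
    (h1 : u.val ≠ k) (h2 : u.val ≠ k + 1) : flipK f k hk u = f u := by
  rw [flipK, Equiv.swap_apply_of_ne_of_ne]
  · intro h; apply h1; rw [h]
  · intro h; apply h2; rw [h]

lemma cnt_flipK (f : Fin (2*n) → Bool) (k : ℕ) (hk : k + 1 < 2*n) (b : Bool)
    (m : Fin (2*n)) (hm : m.val ≤ k) : cnt (flipK f k hk) b m = cnt f b m := by
  unfold cnt
  apply congrArg
  apply filter_congr
  intro u _
  constructor
  · rintro ⟨h1, h2⟩
    refine ⟨h1, ?_⟩
    rw [← flipK_apply_of_ne f k hk u (by have := Fin.lt_def.mp h1; omega)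
      (by have := Fin.lt_def.mp h1; omega)]
    exact h2
  · rintro ⟨h1, h2⟩
    refine ⟨h1, ?_⟩
    rw [flipK_apply_of_ne f k hk u (by have := Fin.lt_def.mp h1; omega)
      (by have := Fin.lt_def.mp h1; omega)]
    exact h2

lemma cntLe_flipK (f : Fin (2*n) → Bool) (k : ℕ) (hk : k + 1 < 2*n) (b : Bool)
    (m : Fin (2*n)) (hm : m.val ≠ k) : cntLe (flipK f k hk) b m = cntLe f b m := by
  set σ := Equiv.swap (⟨k, Nat.lt_of_succ_lt hk⟩ : Fin (2*n)) ⟨k+1, hk⟩ with hσ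
  have hσle : ∀ u : Fin (2*n), σ u ≤ m ↔ u ≤ m := by
    intro u
    rcases eq_or_ne u ⟨k, Nat.lt_of_succ_lt hk⟩ with h | h
    · subst h
      rw [hσ, Equiv.swap_apply_left]
      simp only [Fin.le_def]
      omega
    · rcases eq_or_ne u ⟨k+1, hk⟩ with h' | h'
      · subst h'
        rw [hσ, Equiv.swap_apply_right]
        simp only [Fin.le_def]
        omega
      · rw [hσ, Equiv.swap_apply_of_ne_of_ne h h']
  unfold cntLe
  have : (univ.filter fun u => u ≤ m ∧ flipK f k hk u = b) =
      (univ.filter fun u => σ u ≤ m ∧ f (σ u) = b) := by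
    apply filter_congr
    intro u _
    rw [hσle u]
    rfl
  rw [this]
  exact card_filter_equiv σ (fun u => u ≤ m ∧ f u = b)

lemma trues_flipK (f : Fin (2*n) → Bool) (k : ℕ) (hk : k + 1 < 2*n) (b : Bool) :
    (univ.filter fun u => flipK f k hk u = b).card = (univ.filter fun u => f u = b).card :=
  card_filter_equiv (Equiv.swap (⟨k, Nat.lt_of_succ_lt hk⟩ : Fin (2*n)) ⟨k+1, hk⟩)
    (fun u => f u = b)

lemma flipK_mem_dyckSet (f : Fin (2*n) → Bool) (hf : f ∈ dyckSet n) (k : ℕ)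
    (hk : k + 1 < 2*n) (hodd : Odd (cnt f true ⟨k, Nat.lt_of_succ_lt hk⟩))
    (heven : Even (cnt f false ⟨k, Nat.lt_of_succ_lt hk⟩)) :
    flipK f k hk ∈ dyckSet n := by
  rw [mem_dyckSet]
  constructor
  · rw [trues_flipK]
    exact (mem_dyckSet.mp hf).1
  · intro m
    rcases eq_or_ne m.val k with hm | hm
    · have hmF : m = (⟨k, Nat.lt_of_succ_lt hk⟩ : Fin (2*n)) := Fin.ext hm
      rw [hmF]
      rw [cntLe_eq, cntLe_eq, cnt_flipK _ _ _ _ _ (le_refl k), cnt_flipK _ _ _ _ _ (le_refl k)]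
      have hle := cnt_le f hf ⟨k, Nat.lt_of_succ_lt hk⟩
      have hxy : cnt f false ⟨k, Nat.lt_of_succ_lt hk⟩ ≠ cnt f true ⟨k, Nat.lt_of_succ_lt hk⟩ := by
        intro h
        obtain ⟨r, hr⟩ := hodd
        obtain ⟨t, ht⟩ := heven
        omega
      have h1 : cnt f false ⟨k, Nat.lt_of_succ_lt hk⟩ + 1 ≤ cnt f true ⟨k, Nat.lt_of_succ_lt hk⟩ := by
        omega
      simp only [flipK_apply_k]
      cases hb : f ⟨k+1, hk⟩ <;> simp [hb] <;> omega
    · rw [cntLe_flipK _ _ _ _ _ hm, cntLe_flipK _ _ _ _ _ hm]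
      exact (mem_dyckSet.mp hf).2 m


lemma P_elim (f : Fin (2*n) → Bool) (k : ℕ) (hP : P n f k) (hk : k + 1 < 2*n) :
    Odd (cnt f true ⟨k, Nat.lt_of_succ_lt hk⟩) ∧ Even (cnt f false ⟨k, Nat.lt_of_succ_lt hk⟩) ∧
      f ⟨k, Nat.lt_of_succ_lt hk⟩ ≠ f ⟨k+1, hk⟩ := by
  obtain ⟨h, a, b, c⟩ := hP
  exact ⟨a, b, c⟩

lemma P_flipK (f : Fin (2*n) → Bool) (k : ℕ) (hk : k + 1 < 2*n) (hP : P n f k) :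
    P n (flipK f k hk) k := by
  obtain ⟨hodd, heven, hne⟩ := P_elim f k hP hk
  refine ⟨hk, ?_, ?_, ?_⟩
  · rw [cnt_flipK _ _ _ _ _ (le_refl k)]; exact hodd
  · rw [cnt_flipK _ _ _ _ _ (le_refl k)]; exact heven
  · rw [flipK_apply_k, flipK_apply_k1]; exact Ne.symm hne

lemma not_P_flipK (f : Fin (2*n) → Bool) (k : ℕ) (hk : k + 1 < 2*n) (hP : P n f k)
    (m : ℕ) (hm : m < k) (hnP : ¬ P n f m) : ¬ P n (flipK f k hk) m := by
  intro hPg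
  have hm1 : m + 1 < 2*n := hPg.choose
  obtain ⟨godd, geven, gne⟩ := P_elim _ m hPg hm1
  rw [cnt_flipK _ _ _ _ _ (by simp only [Fin.val_mk]; omega)] at godd geven
  rcases eq_or_ne (m+1) k with he | hne2
  · -- parity contradiction : both k and m would be odd, but m + 1 = k
    obtain ⟨kodd, keven, -⟩ := P_elim f k hP hk
    have hsk := cnt_add f ⟨k, Nat.lt_of_succ_lt hk⟩
    have hsm := cnt_add f ⟨m, Nat.lt_of_succ_lt hm1⟩
    simp only [Fin.val_mk] at hsk hsm
    obtain ⟨r, hr⟩ := kodd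
    obtain ⟨t, ht⟩ := keven
    obtain ⟨r', hr'⟩ := godd
    obtain ⟨t', ht'⟩ := geven
    omega
  · apply hnP
    rw [flipK_apply_of_ne f k hk _ (by simp only [Fin.val_mk]; omega)
        (by simp only [Fin.val_mk]; omega),
      flipK_apply_of_ne f k hk _ (by simp only [Fin.val_mk]; omega)
        (by simp only [Fin.val_mk]; omega)] at gne
    exact ⟨hm1, godd, geven, gne⟩

lemma swap_lt_iff (k : ℕ) (hk : k + 1 < 2*n) (p q : Fin (2*n))
    (h1 : ¬(p.val = k ∧ q.val = k+1)) (h2 : ¬(p.val = k+1 ∧ q.val = k)) :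
    (Equiv.swap (⟨k, Nat.lt_of_succ_lt hk⟩ : Fin (2*n)) ⟨k+1, hk⟩ p <
      Equiv.swap (⟨k, Nat.lt_of_succ_lt hk⟩ : Fin (2*n)) ⟨k+1, hk⟩ q ↔ p < q) := by
  rcases p with ⟨pv, hp⟩
  rcases q with ⟨qv, hq⟩
  simp only [Fin.val_mk] at h1 h2
  simp only [Equiv.swap_apply_def, Fin.mk.injEq]
  split_ifs <;> simp only [Fin.lt_def, Fin.val_mk] <;> omega

lemma areaAbove_flipK (f : Fin (2*n) → Bool) (k : ℕ) (hk : k + 1 < 2*n)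
    (hne : f ⟨k, Nat.lt_of_succ_lt hk⟩ ≠ f ⟨k+1, hk⟩) :
    Even (areaAbove (flipK f k hk)) ↔ ¬ Even (areaAbove f) := by
  classical
  set kF : Fin (2*n) := ⟨k, Nat.lt_of_succ_lt hk⟩ with hkF
  set kF1 : Fin (2*n) := ⟨k+1, hk⟩ with hkF1
  set σ := Equiv.swap kF kF1 with hσ
  have hvF : kF.val = k := rfl
  have hvF1 : kF1.val = k + 1 := rfl
  have hkk1 : kF < kF1 := by rw [Fin.lt_def, hvF, hvF1]; omega
  have key : areaAbove (flipK f k hk) =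
      (univ.filter (fun q : Fin (2*n) × Fin (2*n) =>
        σ q.1 < σ q.2 ∧ f q.1 = false ∧ f q.2 = true)).card := by
    unfold areaAbove
    have h1 : (univ.filter (fun p : Fin (2*n) × Fin (2*n) =>
        p.1 < p.2 ∧ flipK f k hk p.1 = false ∧ flipK f k hk p.2 = true)) =
        univ.filter (fun p : Fin (2*n) × Fin (2*n) =>
          (fun q : Fin (2*n) × Fin (2*n) => σ q.1 < σ q.2 ∧ f q.1 = false ∧ f q.2 = true)
            ((σ.prodCongr σ) p)) := by
      apply filter_congr
      intro p _
      simp only [Equiv.prodCongr_apply, Prod.map_fst, Prod.map_snd, eq_iff_iff]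
      rw [hσ]
      simp only [Equiv.swap_apply_self]
      rfl
    rw [h1]
    exact card_filter_equiv (σ.prodCongr σ)
      (fun q : Fin (2*n) × Fin (2*n) => σ q.1 < σ q.2 ∧ f q.1 = false ∧ f q.2 = true)
  rw [key]
  have hswL : σ kF = kF1 := Equiv.swap_apply_left kF kF1
  have hswR : σ kF1 = kF := Equiv.swap_apply_right kF kF1
  -- order is preserved except on the special pairs
  have horder : ∀ p q : Fin (2*n), ¬(p = kF ∧ q = kF1) → ¬(p = kF1 ∧ q = kF) →
      (σ p < σ q ↔ p < q) := by
    intro p q hpq1 hpq2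
    rw [hσ, hkF, hkF1]
    apply swap_lt_iff k hk
    · rintro ⟨e1, e2⟩
      exact hpq1 ⟨Fin.ext (by rw [e1, hvF]), Fin.ext (by rw [e2, hvF1])⟩
    · rintro ⟨e1, e2⟩
      exact hpq2 ⟨Fin.ext (by rw [e1, hvF1]), Fin.ext (by rw [e2, hvF])⟩
  cases hc : f kF with
  | false =>
    have hc1 : f kF1 = true := by
      cases hc1 : f kF1 with
      | true => rfl
      | false => rw [hc, hc1] at hne; exact absurd rfl hne
    have hA : (univ.filter (fun p : Fin (2*n) × Fin (2*n) =>
        p.1 < p.2 ∧ f p.1 = false ∧ f p.2 = true)) =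
        insert (kF, kF1) (univ.filter (fun q : Fin (2*n) × Fin (2*n) =>
          σ q.1 < σ q.2 ∧ f q.1 = false ∧ f q.2 = true)) := by
      ext p
      simp only [Finset.mem_insert, mem_filter, mem_univ, true_and]
      constructor
      · rintro ⟨h1, h2, h3⟩
        by_cases hp : p = (kF, kF1)
        · exact Or.inl hp
        · refine Or.inr ⟨?_, h2, h3⟩
          rw [horder p.1 p.2 ?_ ?_]
          · exact h1
          · rintro ⟨e1, e2⟩
            exact hp (Prod.ext_iff.mpr ⟨e1, e2⟩)
          · rintro ⟨e1, e2⟩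
            rw [e1, e2] at h1
            exact absurd (lt_trans h1 hkk1) (lt_irrefl kF1)
      · rintro (rfl | ⟨h1, h2, h3⟩)
        · exact ⟨hkk1, hc, hc1⟩
        · refine ⟨?_, h2, h3⟩
          rw [← horder p.1 p.2 ?_ ?_]
          · exact h1
          · rintro ⟨e1, e2⟩
            rw [e1, e2, hswL, hswR] at h1
            exact absurd (lt_trans h1 hkk1) (lt_irrefl kF1)
          · rintro ⟨e1, e2⟩
            rw [e1, hc1] at h2
            exact Bool.noConfusion h2
    have hnotmem : (kF, kF1) ∉ (univ.filter (fun q : Fin (2*n) × Fin (2*n) =>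
        σ q.1 < σ q.2 ∧ f q.1 = false ∧ f q.2 = true)) := by
      simp only [mem_filter, mem_univ, true_and, not_and]
      intro h1
      rw [hswL, hswR] at h1
      exact absurd (lt_trans h1 hkk1) (lt_irrefl kF1)
    have hcard : areaAbove f =
        (univ.filter (fun q : Fin (2*n) × Fin (2*n) =>
          σ q.1 < σ q.2 ∧ f q.1 = false ∧ f q.2 = true)).card + 1 := by
      unfold areaAbove
      rw [hA, Finset.card_insert_of_notMem hnotmem]
    rw [hcard, Nat.even_add_one, not_not]
  | true =>
    have hc1 : f kF1 = false := by
      cases hc1 : f kF1 with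
      | false => rfl
      | true => rw [hc, hc1] at hne; exact absurd rfl hne
    have hS : (univ.filter (fun q : Fin (2*n) × Fin (2*n) =>
        σ q.1 < σ q.2 ∧ f q.1 = false ∧ f q.2 = true)) =
        insert (kF1, kF) (univ.filter (fun p : Fin (2*n) × Fin (2*n) =>
          p.1 < p.2 ∧ f p.1 = false ∧ f p.2 = true)) := by
      ext p
      simp only [Finset.mem_insert, mem_filter, mem_univ, true_and]
      constructor
      · rintro ⟨h1, h2, h3⟩
        by_cases hp : p = (kF1, kF)
        · exact Or.inl hp
        · refine Or.inr ⟨?_, h2, h3⟩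
          rw [← horder p.1 p.2 ?_ ?_]
          · exact h1
          · rintro ⟨e1, e2⟩
            rw [e1, hc] at h2
            exact Bool.noConfusion h2
          · rintro ⟨e1, e2⟩
            exact hp (Prod.ext_iff.mpr ⟨e1, e2⟩)
      · rintro (rfl | ⟨h1, h2, h3⟩)
        · refine ⟨?_, hc1, hc⟩
          show σ kF1 < σ kF
          rw [hswL, hswR]
          exact hkk1
        · refine ⟨?_, h2, h3⟩
          rw [horder p.1 p.2 ?_ ?_]
          · exact h1
          · rintro ⟨e1, e2⟩
            rw [e1, hc] at h2
            exact Bool.noConfusion h2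
          · rintro ⟨e1, e2⟩
            rw [e1, e2] at h1
            exact absurd (lt_trans h1 hkk1) (lt_irrefl kF1)
    have hnotmem : (kF1, kF) ∉ (univ.filter (fun p : Fin (2*n) × Fin (2*n) =>
        p.1 < p.2 ∧ f p.1 = false ∧ f p.2 = true)) := by
      simp only [mem_filter, mem_univ, true_and, not_and]
      intro h1
      exact absurd (lt_trans h1 hkk1) (lt_irrefl kF1)
    have hcard : (univ.filter (fun q : Fin (2*n) × Fin (2*n) =>
        σ q.1 < σ q.2 ∧ f q.1 = false ∧ f q.2 = true)).card = areaAbove f + 1 := by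
      unfold areaAbove
      rw [hS, Finset.card_insert_of_notMem hnotmem]
    rw [hcard, Nat.even_add_one]


/-- the sign-reversing involution: swap the two steps at the first doubly-touched
X-square (located via the minimal `k` satisfying `P`). -/
noncomputable def flip (n : ℕ) (f : Fin (2*n) → Bool) : Fin (2*n) → Bool :=
  letI : Decidable (∃ k, P n f k) := Classical.propDecidable _
  if hex : ∃ k, P n f k then flipK f (Nat.find hex) (Nat.find_spec hex).choose else f

lemma flip_good (f : Fin (2*n) → Bool) (hd : f ∈ dyckSet n) (hX : TouchesXSquare n f) :
    flip n f ∈ dyckSet n ∧ TouchesXSquare n (flip n f) ∧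
      (Even (areaAbove (flip n f)) ↔ ¬ Even (areaAbove f)) ∧ flip n (flip n f) = f := by
  have hex : ∃ k, P n f k := exists_P f hX
  have hPk : P n f (Nat.find hex) := Nat.find_spec hex
  have hfl : flip n f = flipK f (Nat.find hex) (Nat.find_spec hex).choose := by
    unfold flip
    rw [dif_pos hex]
  set k := Nat.find hex with hkdef
  set hk := (Nat.find_spec hex).choose with hhk
  obtain ⟨hodd, heven, hnef⟩ := P_elim f k hPk hk
  have hdyck' : flipK f k hk ∈ dyckSet n := flipK_mem_dyckSet f hd k hk hodd heven
  have hP' : P n (flipK f k hk) k := P_flipK f k hk hPk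
  refine ⟨?_, ?_, ?_, ?_⟩
  · rw [hfl]; exact hdyck'
  · rw [hfl]; exact touches_of_P _ hdyck' k hP'
  · rw [hfl]; exact areaAbove_flipK f k hk hnef
  · have hex' : ∃ m, P n (flipK f k hk) m := ⟨k, hP'⟩
    have hfind : Nat.find hex' = k := by
      rw [Nat.find_eq_iff]
      exact ⟨hP', fun m hm => not_P_flipK f k hk hPk m hm (Nat.find_min hex hm)⟩
    calc flip n (flip n f) = flip n (flipK f k hk) := by rw [hfl]
      _ = flipK (flipK f k hk) (Nat.find hex') (Nat.find_spec hex').choose := by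
            unfold flip
            rw [dif_pos hex']
      _ = flipK (flipK f k hk) k hk := flipK_congr _ _ _ _ hk hfind
      _ = f := flipK_flipK f k hk

end Stmt19

/-- Mark with an X every square in an even-indexed column and odd-indexed row. Then among
Dyck paths in the `n × n` grid touching two edges of some X-marked square, the number with
even area above the path equals the number with odd area above the path. -/
theorem stmt19 (n : ℕ) (hn : 1 ≤ n) :
    ((dyckSet n).filter (fun f =>
        TouchesXSquare n f ∧ Even (areaAbove f))).card =
      ((dyckSet n).filter (fun f =>
        TouchesXSquare n f ∧ ¬ Even (areaAbove f))).card := by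
  classical
  apply Finset.card_nbij' (i := fun f => Stmt19.flip n f) (j := fun f => Stmt19.flip n f)
  · intro f hf
    simp only [Finset.mem_coe, Finset.mem_filter] at hf ⊢
    obtain ⟨hd, hX, hE⟩ := hf
    obtain ⟨h1, h2, h3, h4⟩ := Stmt19.flip_good f hd hX
    exact ⟨h1, h2, fun h => (h3.mp h) hE⟩
  · intro f hf
    simp only [Finset.mem_coe, Finset.mem_filter] at hf ⊢
    obtain ⟨hd, hX, hE⟩ := hf
    obtain ⟨h1, h2, h3, h4⟩ := Stmt19.flip_good f hd hX
    exact ⟨h1, h2, h3.mpr hE⟩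
  · intro f hf
    simp only [Finset.mem_coe, Finset.mem_filter] at hf
    obtain ⟨hd, hX, hE⟩ := hf
    exact (Stmt19.flip_good f hd hX).2.2.2
  · intro f hf
    simp only [Finset.mem_coe, Finset.mem_filter] at hf
    obtain ⟨hd, hX, hE⟩ := hf
    exact (Stmt19.flip_good f hd hX).2.2.2
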